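/- Let Q be a rational constellation pattern with k ≥ 2. For every measurable function g : [0,1] → ℝ with |g(x)| ≤ 1 for all x ∈ [0,1], and every real λ with |λ| ≤ 1, one has |Φ_Q(λ·g) − 2^{−k} − 2^{−k}·λ²·T_2(g)| ≤ λ⁴. -/

import Mathlib

open MeasureTheory Finset intervalIntegral

/-- `L i x y = (1 − qᵢ)x + qᵢ y`. -/
noncomputable def Laff (q : ℕ → ℚ) (i : ℕ) (x y : ℝ) : ℝ :=
  (1 - (q i : ℝ)) * x + (q i : ℝ) * y

/-- `Φ_Q(b) = ∫₀¹∫₀¹ [∏ᵢ (1 + b(Lᵢ(x,y)))/2 + ∏ᵢ (1 − b(Lᵢ(x,y)))/2] dy dx`. -/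
noncomputable def PhiQ (k : ℕ) (q : ℕ → ℚ) (b : ℝ → ℝ) : ℝ :=
  ∫ x in (0 : ℝ)..1, ∫ y in (0 : ℝ)..1,
    ((∏ i ∈ Finset.range (k + 1), (1 + b (Laff q i x y)) / 2) +
     (∏ i ∈ Finset.range (k + 1), (1 - b (Laff q i x y)) / 2))

/-- `T₂(g) = Σ_{0 ≤ i < j ≤ k} ∫₀¹∫₀¹ g(Lᵢ(x,y))·g(Lⱼ(x,y)) dy dx`. -/
noncomputable def T2 (k : ℕ) (q : ℕ → ℚ) (g : ℝ → ℝ) : ℝ :=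
  ∑ i ∈ Finset.range (k + 1), ∑ j ∈ Finset.Ioc i k,
    ∫ x in (0 : ℝ)..1, ∫ y in (0 : ℝ)..1, g (Laff q i x y) * g (Laff q j x y)

lemma expand_pm (n : ℕ) (b : ℕ → ℝ) :
    (∏ i ∈ Finset.range n, (1 + b i) / 2) + (∏ i ∈ Finset.range n, (1 - b i) / 2)
    = ∑ t ∈ (Finset.range n).powerset,
        ((1 + (-1 : ℝ) ^ t.card) / 2 ^ n) * ∏ i ∈ t, b i := by
  have hp : ∀ f : ℕ → ℝ, (∏ i ∈ Finset.range n, f i / 2)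
      = (∏ i ∈ Finset.range n, f i) / 2 ^ n := by
    intro f
    rw [Finset.prod_div_distrib, Finset.prod_const, Finset.card_range]
  have h1 : (∏ i ∈ Finset.range n, (1 + b i))
      = ∑ t ∈ (Finset.range n).powerset, ∏ i ∈ t, b i := by
    have := Finset.prod_add b (fun _ => (1 : ℝ)) (Finset.range n)
    simpa [add_comm] using this
  have h2 : (∏ i ∈ Finset.range n, (1 - b i))
      = ∑ t ∈ (Finset.range n).powerset, (-1 : ℝ) ^ t.card * ∏ i ∈ t, b i := by
    have h := Finset.prod_add (fun i => -b i) (fun _ => (1 : ℝ)) (Finset.range n)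
    simp only [Finset.prod_const_one, mul_one] at h
    have h' : (∏ i ∈ Finset.range n, (1 - b i)) = ∏ i ∈ Finset.range n, (-b i + 1) := by
      refine Finset.prod_congr rfl fun i _ => by ring
    rw [h', h]
    refine Finset.sum_congr rfl fun t _ => ?_
    rw [show (∏ i ∈ t, -b i) = ∏ i ∈ t, (-1) * b i from Finset.prod_congr rfl fun i _ => by ring,
      Finset.prod_mul_distrib, Finset.prod_const]
  rw [hp, hp, h1, h2, ← add_div, ← Finset.sum_add_distrib, Finset.sum_div]
  refine Finset.sum_congr rfl fun t _ => ?_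
  ring

lemma pair_sum (k : ℕ) (H : Finset ℕ → ℝ) :
    ∑ i ∈ Finset.range (k + 1), ∑ j ∈ Finset.Ioc i k, H {i, j}
    = ∑ t ∈ Finset.powersetCard 2 (Finset.range (k + 1)), H t := by
  rw [Finset.sum_sigma' (Finset.range (k + 1)) (fun i => Finset.Ioc i k)
    (fun i j => H {i, j})]
  refine Finset.sum_bij (fun p _ => ({p.1, p.2} : Finset ℕ)) ?_ ?_ ?_ ?_
  · rintro ⟨a, b⟩ ha
    dsimp only
    simp only [Finset.mem_sigma, Finset.mem_range, Finset.mem_Ioc] at ha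
    rw [Finset.mem_powersetCard]
    refine ⟨?_, Finset.card_pair (by omega)⟩
    intro x hx
    simp only [Finset.mem_insert, Finset.mem_singleton] at hx
    rcases hx with h | h <;> subst h <;> simp only [Finset.mem_range] <;> omega
  · rintro ⟨a, b⟩ ha ⟨c, d⟩ hc h
    simp only at h
    simp only [Finset.mem_sigma, Finset.mem_range, Finset.mem_Ioc] at ha hc
    have hab : a < b := ha.2.1
    have hcd : c < d := hc.2.1
    have h1 : a ∈ ({c, d} : Finset ℕ) := h ▸ Finset.mem_insert_self a {b}
    have h2 : b ∈ ({c, d} : Finset ℕ) := h ▸ (by simp)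
    have h3 : c ∈ ({a, b} : Finset ℕ) := h ▸ Finset.mem_insert_self c {d}
    have h4 : d ∈ ({a, b} : Finset ℕ) := h ▸ (by simp)
    simp only [Finset.mem_insert, Finset.mem_singleton] at h1 h2 h3 h4
    have : a = c ∧ b = d := by omega
    simp [this.1, this.2]
  · intro t ht
    rw [Finset.mem_powersetCard] at ht
    obtain ⟨a, b, hab, rfl⟩ := Finset.card_eq_two.mp ht.2
    have ha : a < k + 1 := by
      have := ht.1 (Finset.mem_insert_self a {b}); simpa [Finset.mem_range] using this
    have hb : b < k + 1 := by
      have := ht.1 (by simp : b ∈ ({a, b} : Finset ℕ)); simpa [Finset.mem_range] using this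
    rcases lt_or_gt_of_ne hab with h | h
    · exact ⟨⟨a, b⟩, by simp [Finset.mem_sigma, Finset.mem_range, Finset.mem_Ioc]; omega, rfl⟩
    · exact ⟨⟨b, a⟩, by simp [Finset.mem_sigma, Finset.mem_range, Finset.mem_Ioc]; omega,
        by rw [Finset.pair_comm]⟩
  · intros; rfl

/-- second-order expansion of `Φ_Q` at the random point. -/
theorem stmt_9 (k : ℕ) (hk : 2 ≤ k) (q : ℕ → ℚ)
    (hq0 : q 0 = 0) (hqk : q k = 1)
    (hmono : ∀ i j : ℕ, i < j → j ≤ k → q i < q j)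
    (D : ℕ) (hD : 0 < D)
    (hDden : ∀ i ≤ k, ((D : ℚ) * q i).den = 1)
    (hDmin : ∀ D' : ℕ, 0 < D' → (∀ i ≤ k, ((D' : ℚ) * q i).den = 1) → D ≤ D')
    (g : ℝ → ℝ) (hg : Measurable g) (hg1 : ∀ x ∈ Set.Icc (0 : ℝ) 1, |g x| ≤ 1)
    (lam : ℝ) (hlam : |lam| ≤ 1) :
    |PhiQ k q (fun x => lam * g x) - (2 : ℝ) ^ (-(k : ℤ))
        - (2 : ℝ) ^ (-(k : ℤ)) * lam ^ 2 * T2 k q g| ≤ lam ^ 4 := by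
  classical
  set s : Finset ℕ := Finset.range (k + 1) with hs
  -- bounds on q
  have hq01 : ∀ i ∈ s, 0 ≤ (q i : ℝ) ∧ (q i : ℝ) ≤ 1 := by
    intro i hi
    rw [hs, Finset.mem_range] at hi
    have hik : i ≤ k := by omega
    have h0 : (0 : ℚ) ≤ q i := by
      rcases Nat.eq_zero_or_pos i with h | h
      · subst h; rw [hq0]
      · have := hmono 0 i h hik; rw [hq0] at this; linarith
    have h1 : q i ≤ 1 := by
      rcases eq_or_lt_of_le hik with h | h
      · subst h; rw [hqk]
      · have := hmono i k h le_rfl; rw [hqk] at this; linarith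
    exact ⟨by exact_mod_cast h0, by exact_mod_cast h1⟩
  have hL : ∀ i ∈ s, ∀ x ∈ Set.Icc (0:ℝ) 1, ∀ y ∈ Set.Icc (0:ℝ) 1,
      Laff q i x y ∈ Set.Icc (0:ℝ) 1 := by
    intro i hi x hx y hy
    obtain ⟨h0, h1⟩ := hq01 i hi
    obtain ⟨hx0, hx1⟩ := hx
    obtain ⟨hy0, hy1⟩ := hy
    unfold Laff
    constructor
    · nlinarith
    · nlinarith
  set G : Finset ℕ → ℝ → ℝ → ℝ := fun t x y => ∏ i ∈ t, g (Laff q i x y) with hG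
  have hGmeas : ∀ t : Finset ℕ, Measurable (fun p : ℝ × ℝ => G t p.1 p.2) := by
    intro t
    apply Finset.measurable_prod
    intro i _
    have : Measurable (fun p : ℝ × ℝ => Laff q i p.1 p.2) := by
      unfold Laff
      exact (measurable_fst.const_mul _).add (measurable_snd.const_mul _)
    exact hg.comp this
  have hGbdd : ∀ t ⊆ s, ∀ x ∈ Set.Icc (0:ℝ) 1, ∀ y ∈ Set.Icc (0:ℝ) 1, |G t x y| ≤ 1 := by
    intro t ht x hx y hy
    rw [hG]
    calc |∏ i ∈ t, g (Laff q i x y)| = ∏ i ∈ t, |g (Laff q i x y)| :=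
          Finset.abs_prod _ _
      _ ≤ 1 := Finset.prod_le_one (fun i _ => abs_nonneg _)
          (fun i hi => hg1 _ (hL i (ht hi) x hx y hy))
  have hGyint : ∀ t ⊆ s, ∀ x ∈ Set.Icc (0:ℝ) 1,
      IntervalIntegrable (fun y => G t x y) volume 0 1 := by
    intro t ht x hx
    rw [intervalIntegrable_iff]
    have hm : Measurable (fun y => G t x y) := (hGmeas t).comp measurable_prodMk_left
    have hc : IntegrableOn (fun _ : ℝ => (1:ℝ)) (Set.uIoc (0:ℝ) 1) volume := by
      rw [integrableOn_const_iff]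
      right
      rw [Set.uIoc_of_le zero_le_one]
      exact measure_Ioc_lt_top
    refine hc.mono' hm.aestronglyMeasurable ?_
    filter_upwards [ae_restrict_mem measurableSet_uIoc] with y hy
    rw [Real.norm_eq_abs]
    rw [Set.uIoc_of_le zero_le_one] at hy
    exact hGbdd t ht x hx y ⟨le_of_lt hy.1, hy.2⟩
  set J : Finset ℕ → ℝ → ℝ := fun t x => ∫ y in (0:ℝ)..1, G t x y with hJ
  have hJbdd : ∀ t ⊆ s, ∀ x ∈ Set.Icc (0:ℝ) 1, |J t x| ≤ 1 := by
    intro t ht x hx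
    have h := intervalIntegral.norm_integral_le_of_norm_le_const (C := 1)
      (f := fun y => G t x y) (a := 0) (b := 1) ?_
    · rw [hJ]; simpa using h
    · intro y hy
      rw [Set.uIoc_of_le zero_le_one] at hy
      rw [Real.norm_eq_abs]
      exact hGbdd t ht x hx y ⟨le_of_lt hy.1, hy.2⟩
  have hJmeas : ∀ t, Measurable (J t) := by
    intro t
    have h : J t = fun x => ∫ y in Set.Ioc (0:ℝ) 1, G t x y := by
      funext x
      rw [hJ]
      exact intervalIntegral.integral_of_le zero_le_one
    rw [h]
    have hu : StronglyMeasurable (Function.uncurry fun x y => G t x y) :=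
      (hGmeas t).stronglyMeasurable
    exact (hu.integral_prod_right (ν := volume.restrict (Set.Ioc (0:ℝ) 1))).measurable
  have hJint : ∀ t ⊆ s, IntervalIntegrable (J t) volume 0 1 := by
    intro t ht
    rw [intervalIntegrable_iff]
    have hc : IntegrableOn (fun _ : ℝ => (1:ℝ)) (Set.uIoc (0:ℝ) 1) volume := by
      rw [integrableOn_const_iff]
      right
      rw [Set.uIoc_of_le zero_le_one]
      exact measure_Ioc_lt_top
    refine hc.mono' (hJmeas t).aestronglyMeasurable ?_
    filter_upwards [ae_restrict_mem measurableSet_uIoc] with x hx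
    rw [Real.norm_eq_abs]
    rw [Set.uIoc_of_le zero_le_one] at hx
    exact hJbdd t ht x ⟨le_of_lt hx.1, hx.2⟩
  set I : Finset ℕ → ℝ := fun t => ∫ x in (0:ℝ)..1, J t x with hI
  have hIbdd : ∀ t ⊆ s, |I t| ≤ 1 := by
    intro t ht
    have h := intervalIntegral.norm_integral_le_of_norm_le_const (C := 1)
      (f := J t) (a := 0) (b := 1) ?_
    · rw [hI]; simpa using h
    · intro x hx
      rw [Set.uIoc_of_le zero_le_one] at hx
      rw [Real.norm_eq_abs]
      exact hJbdd t ht x ⟨le_of_lt hx.1, hx.2⟩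
  have hIempty : I ∅ = 1 := by
    rw [hI, hJ, hG]
    simp
  set c : Finset ℕ → ℝ := fun t => ((1 + (-1:ℝ) ^ t.card) / 2 ^ (k+1)) * lam ^ t.card with hc
  -- main expansion
  have key : PhiQ k q (fun x => lam * g x) = ∑ t ∈ s.powerset, c t * I t := by
    have hpoint : ∀ x y : ℝ,
        ((∏ i ∈ Finset.range (k+1), (1 + lam * g (Laff q i x y)) / 2) +
         (∏ i ∈ Finset.range (k+1), (1 - lam * g (Laff q i x y)) / 2))
        = ∑ t ∈ s.powerset, c t * G t x y := by
      intro x y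
      rw [expand_pm (k+1) (fun i => lam * g (Laff q i x y))]
      refine Finset.sum_congr rfl fun t ht => ?_
      rw [hc, hG]
      simp only
      rw [Finset.prod_mul_distrib, Finset.prod_const]
      ring
    unfold PhiQ
    have h1 : (∫ x in (0:ℝ)..1, ∫ y in (0:ℝ)..1,
        ((∏ i ∈ Finset.range (k+1), (1 + lam * g (Laff q i x y)) / 2) +
         (∏ i ∈ Finset.range (k+1), (1 - lam * g (Laff q i x y)) / 2)))
        = ∫ x in (0:ℝ)..1, ∑ t ∈ s.powerset, c t * J t x := by
      refine intervalIntegral.integral_congr fun x hx => ?_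
      rw [Set.uIcc_of_le zero_le_one] at hx
      calc (∫ y in (0:ℝ)..1,
          ((∏ i ∈ Finset.range (k+1), (1 + lam * g (Laff q i x y)) / 2) +
           (∏ i ∈ Finset.range (k+1), (1 - lam * g (Laff q i x y)) / 2)))
          = ∫ y in (0:ℝ)..1, ∑ t ∈ s.powerset, c t * G t x y :=
            intervalIntegral.integral_congr fun y _ => hpoint x y
        _ = ∑ t ∈ s.powerset, ∫ y in (0:ℝ)..1, c t * G t x y :=
            intervalIntegral.integral_finset_sum
              (fun t ht => (hGyint t (Finset.mem_powerset.mp ht) x hx).const_mul _)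
        _ = ∑ t ∈ s.powerset, c t * J t x := by
            refine Finset.sum_congr rfl fun t ht => ?_
            rw [hJ]
            exact intervalIntegral.integral_const_mul _ _
    rw [h1, intervalIntegral.integral_finset_sum
      (fun t ht => (hJint t (Finset.mem_powerset.mp ht)).const_mul _)]
    exact Finset.sum_congr rfl fun t ht => intervalIntegral.integral_const_mul _ _
  -- identify T2
  have hT2 : T2 k q g = ∑ t ∈ Finset.powersetCard 2 s, I t := by
    rw [hs, ← pair_sum k I]
    unfold T2
    refine Finset.sum_congr rfl fun i hi => Finset.sum_congr rfl fun j hj => ?_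
    have hij : i ≠ j := ne_of_lt (Finset.mem_Ioc.mp hj).1
    rw [hI]
    refine intervalIntegral.integral_congr fun x _ => ?_
    rw [hJ]
    refine intervalIntegral.integral_congr fun y _ => ?_
    rw [hG]
    simp only
    rw [Finset.prod_pair hij]
  -- split powerset sum by cardinality
  set S : ℕ → ℝ := fun j => ∑ t ∈ Finset.powersetCard j s, c t * I t with hS
  have hps : ∑ t ∈ s.powerset, c t * I t = ∑ j ∈ Finset.range (k + 2), S j := by
    rw [Finset.sum_powerset s (fun t => c t * I t)]
    rw [show #s = k + 1 from Finset.card_range (k+1)]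
  have hS0 : S 0 = (2:ℝ) ^ (-(k:ℤ)) := by
    rw [hS]
    simp only [Finset.powersetCard_zero, Finset.sum_singleton]
    rw [hIempty, hc]
    simp only [Finset.card_empty, pow_zero, mul_one]
    rw [zpow_neg, zpow_natCast, pow_succ]
    rw [div_eq_iff (by positivity : ((2:ℝ)^k * 2) ≠ 0)]
    field_simp
    norm_num
  have hS1 : S 1 = 0 := by
    rw [hS]
    refine Finset.sum_eq_zero fun t ht => ?_
    have hcard : t.card = 1 := (Finset.mem_powersetCard.mp ht).2
    rw [hc]
    simp only [hcard, pow_one]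
    ring
  have hS2 : S 2 = (2:ℝ) ^ (-(k:ℤ)) * lam ^ 2 * T2 k q g := by
    rw [hS, hT2, Finset.mul_sum]
    refine Finset.sum_congr rfl fun t ht => ?_
    have hcard : t.card = 2 := (Finset.mem_powersetCard.mp ht).2
    rw [hc]
    simp only [hcard]
    rw [show ((1:ℝ) + (-1)^(2:ℕ)) = 2 by norm_num]
    rw [zpow_neg, zpow_natCast, pow_succ]
    have hne : (2:ℝ)^k ≠ 0 := by positivity
    field_simp
  have hsplit : ∑ j ∈ Finset.range (k + 2), S j
      = S 0 + S 1 + S 2 + ∑ j ∈ Finset.Ico 3 (k + 2), S j := by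
    rw [Finset.range_eq_Ico,
      ← Finset.sum_Ico_consecutive S (by omega : (0:ℕ) ≤ 3) (by omega : 3 ≤ k + 2)]
    congr 1
    rw [← Finset.range_eq_Ico]
    simp [Finset.sum_range_succ]
  have hlhs : PhiQ k q (fun x => lam * g x) - (2:ℝ) ^ (-(k:ℤ))
      - (2:ℝ) ^ (-(k:ℤ)) * lam ^ 2 * T2 k q g = ∑ j ∈ Finset.Ico 3 (k + 2), S j := by
    rw [key, hps, hsplit, hS0, hS1, hS2]
    ring
  rw [hlhs]
  -- bound the tail
  have hlam4 : (0:ℝ) ≤ lam ^ 4 := by positivity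
  have hwnonneg : ∀ n : ℕ, (0:ℝ) ≤ 1 + (-1:ℝ) ^ n := by
    intro n
    rcases Nat.even_or_odd n with h | h
    · rw [h.neg_one_pow]; norm_num
    · rw [h.neg_one_pow]; norm_num
  have hterm : ∀ j ∈ Finset.Ico 3 (k + 2), ∀ t ∈ Finset.powersetCard j s,
      |c t * I t| ≤ ((1 + (-1:ℝ) ^ t.card) / 2 ^ (k+1)) * lam ^ 4 := by
    intro j hj t ht
    obtain ⟨hts, hcard⟩ := Finset.mem_powersetCard.mp ht
    have hj3 : 3 ≤ j := (Finset.mem_Ico.mp hj).1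
    rcases Nat.even_or_odd t.card with he | ho
    · have h4 : 4 ≤ t.card := by
        rcases he with ⟨m, hm⟩
        omega
      have hc1 : |c t| ≤ ((1 + (-1:ℝ) ^ t.card) / 2 ^ (k+1)) * lam ^ 4 := by
        rw [hc]
        simp only
        rw [abs_mul, abs_div]
        rw [abs_of_nonneg (hwnonneg t.card), abs_of_nonneg (by positivity : (0:ℝ) ≤ (2:ℝ)^(k+1))]
        refine mul_le_mul_of_nonneg_left ?_ (div_nonneg (hwnonneg _) (by positivity))
        rw [abs_pow]
        calc |lam| ^ t.card ≤ |lam| ^ 4 :=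
              pow_le_pow_of_le_one (abs_nonneg _) hlam h4
          _ = lam ^ 4 := by
              rw [← abs_pow, abs_of_nonneg hlam4]
      calc |c t * I t| = |c t| * |I t| := abs_mul _ _
        _ ≤ |c t| * 1 := mul_le_mul_of_nonneg_left (hIbdd t hts) (abs_nonneg _)
        _ = |c t| := mul_one _
        _ ≤ _ := hc1
    · have : c t = 0 := by
        rw [hc]
        simp only
        rw [ho.neg_one_pow]
        ring
      rw [this, zero_mul, abs_zero]
      exact mul_nonneg (div_nonneg (hwnonneg _) (by positivity)) hlam4
  calc |∑ j ∈ Finset.Ico 3 (k + 2), S j|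
      ≤ ∑ j ∈ Finset.Ico 3 (k + 2), |S j| := Finset.abs_sum_le_sum_abs _ _
    _ ≤ ∑ j ∈ Finset.Ico 3 (k + 2), ∑ t ∈ Finset.powersetCard j s,
          ((1 + (-1:ℝ) ^ t.card) / 2 ^ (k+1)) * lam ^ 4 := by
        refine Finset.sum_le_sum fun j hj => ?_
        rw [hS]
        calc |∑ t ∈ Finset.powersetCard j s, c t * I t|
            ≤ ∑ t ∈ Finset.powersetCard j s, |c t * I t| := Finset.abs_sum_le_sum_abs _ _
          _ ≤ _ := Finset.sum_le_sum fun t ht => hterm j hj t ht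
    _ ≤ ∑ j ∈ Finset.range (k + 2), ∑ t ∈ Finset.powersetCard j s,
          ((1 + (-1:ℝ) ^ t.card) / 2 ^ (k+1)) * lam ^ 4 := by
        refine Finset.sum_le_sum_of_subset_of_nonneg ?_ ?_
        · intro j hj
          rw [Finset.mem_range]
          exact (Finset.mem_Ico.mp hj).2
        · intro j _ _
          refine Finset.sum_nonneg fun t _ => ?_
          exact mul_nonneg (div_nonneg (hwnonneg _) (by positivity)) hlam4
    _ = ∑ t ∈ s.powerset, ((1 + (-1:ℝ) ^ t.card) / 2 ^ (k+1)) * lam ^ 4 := by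
        rw [Finset.sum_powerset s (fun t => ((1 + (-1:ℝ) ^ t.card) / 2 ^ (k+1)) * lam ^ 4)]
        rw [show #s = k + 1 from Finset.card_range (k+1)]
    _ = lam ^ 4 := by
        have hneg : ∑ t ∈ s.powerset, (-1:ℝ) ^ t.card = 0 := by
          have hz := Finset.sum_powerset_neg_one_pow_card_of_nonempty
            (x := s) ⟨0, by rw [hs]; simp⟩
          have : ((∑ t ∈ s.powerset, (-1:ℤ) ^ t.card : ℤ) : ℝ)
              = ∑ t ∈ s.powerset, (-1:ℝ) ^ t.card := by
            push_cast
            rfl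
          rw [← this, hz]
          norm_num
        have hone : ∑ t ∈ s.powerset, (1:ℝ) = 2 ^ (k+1) := by
          rw [Finset.sum_const, Finset.card_powerset,
            show #s = k + 1 from Finset.card_range (k+1)]
          simp
        have hexp : ∑ t ∈ s.powerset, ((1 + (-1:ℝ) ^ t.card) / 2 ^ (k+1)) * lam ^ 4
            = (∑ t ∈ s.powerset, (1 + (-1:ℝ) ^ t.card)) / 2 ^ (k+1) * lam ^ 4 := by
          rw [Finset.sum_div, Finset.sum_mul]
        rw [hexp, Finset.sum_add_distrib, hneg, hone, add_zero,
          div_self (by positivity : ((2:ℝ)^(k+1)) ≠ 0), one_mul]
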